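/- Let S₋ and S₊ be real symmetric n×n matrices such that D := S₊ − S₋ is positive semidefinite, and let X, Y ∈ ℝⁿ satisfy, for every k ∈ ℝⁿ, (1/2)(⟨S₋k, k⟩ + ⟨S₋X, X⟩ − ⟨S₊(X−k), X−k⟩) ≤ ⟨Y, k⟩. Then ‖Y − (2S₊ − S₋)X‖ ≤ 2·√‖D‖·√⟨DX, X⟩, and moreover ‖Y − (2S₊ − S₋)X‖ ≤ 2‖D‖·‖P X‖, where P is the orthogonal projection of ℝⁿ onto the range of D. (This is the linear-algebra content of the paper's Theorem comparing contingent cones of weak KAM pseudographs of u₊ with the Green bundles, with S₋, S₊ the matrices of G₋, G₊.) -/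

import Mathlib

open Matrix RealInnerProductSpace

/-- linear-algebra content of the comparison between contingent cones of
weak KAM pseudographs of `u₊` and the Green bundles. -/
theorem stmt_1 {n : ℕ} (Sm Sp : Matrix (Fin n) (Fin n) ℝ)
    (hSm : Sm.IsSymm) (hSp : Sp.IsSymm)
    (hD : ∀ v : EuclideanSpace ℝ (Fin n), 0 ≤ ⟪Matrix.toEuclideanLin (Sp - Sm) v, v⟫)
    (X Y : EuclideanSpace ℝ (Fin n))
    (h : ∀ k : EuclideanSpace ℝ (Fin n),
      (1 / 2) * (⟪Matrix.toEuclideanLin Sm k, k⟫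
        + ⟪Matrix.toEuclideanLin Sm X, X⟫
        - ⟪Matrix.toEuclideanLin Sp (X - k), X - k⟫) ≤ ⟪Y, k⟫) :
    ‖Y - Matrix.toEuclideanLin ((2 : ℝ) • Sp - Sm) X‖
      ≤ 2 * Real.sqrt ‖Matrix.toEuclideanCLM (𝕜 := ℝ) (Sp - Sm)‖
          * Real.sqrt ⟪Matrix.toEuclideanLin (Sp - Sm) X, X⟫ ∧
    ‖Y - Matrix.toEuclideanLin ((2 : ℝ) • Sp - Sm) X‖
      ≤ 2 * ‖Matrix.toEuclideanCLM (𝕜 := ℝ) (Sp - Sm)‖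
          * ‖(Submodule.orthogonalProjectionOnto (LinearMap.range (Matrix.toEuclideanLin (Sp - Sm))) X :
              EuclideanSpace ℝ (Fin n))‖ := by
  classical
  -- symmetry facts
  have hSpH : Sp.IsHermitian := by
    rwa [Matrix.IsHermitian, Matrix.conjTranspose_eq_transpose_of_trivial]
  have hSmH : Sm.IsHermitian := by
    rwa [Matrix.IsHermitian, Matrix.conjTranspose_eq_transpose_of_trivial]
  have hDH : (Sp - Sm).IsHermitian := hSpH.sub hSmH
  have hTpS := Matrix.isHermitian_iff_isSymmetric.1 hSpH
  have hTS := Matrix.isHermitian_iff_isSymmetric.1 hDH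
  set T : EuclideanSpace ℝ (Fin n) →ₗ[ℝ] EuclideanSpace ℝ (Fin n) :=
    Matrix.toEuclideanLin (Sp - Sm) with hTdef
  set Tp : EuclideanSpace ℝ (Fin n) →ₗ[ℝ] EuclideanSpace ℝ (Fin n) :=
    Matrix.toEuclideanLin Sp with hTpdef
  set Tm : EuclideanSpace ℝ (Fin n) →ₗ[ℝ] EuclideanSpace ℝ (Fin n) :=
    Matrix.toEuclideanLin Sm with hTmdef
  have hTsub : ∀ v, T v = Tp v - Tm v := by
    intro v
    rw [hTdef, hTpdef, hTmdef, map_sub, LinearMap.sub_apply]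
  set B : ℝ := ⟪T X, X⟫ with hBdef
  have hB0 : 0 ≤ B := hD X
  set C : ℝ := ‖Matrix.toEuclideanCLM (𝕜 := ℝ) (Sp - Sm)‖ with hCdef
  have hC0 : 0 ≤ C := norm_nonneg _
  have hCb : ∀ v : EuclideanSpace ℝ (Fin n), ⟪T v, v⟫ ≤ C * ‖v‖ ^ 2 := by
    intro v
    have h1 : T v = Matrix.toEuclideanCLM (𝕜 := ℝ) (Sp - Sm) v := by
      rw [hTdef, ← Matrix.coe_toEuclideanCLM_eq_toEuclideanLin]; rfl
    calc ⟪T v, v⟫ ≤ ‖T v‖ * ‖v‖ := real_inner_le_norm _ _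
      _ ≤ (C * ‖v‖) * ‖v‖ := by
          apply mul_le_mul_of_nonneg_right _ (norm_nonneg v)
          rw [h1]; exact (Matrix.toEuclideanCLM (𝕜 := ℝ) (Sp - Sm)).le_opNorm v
      _ = C * ‖v‖ ^ 2 := by ring
  -- generic quadratic lemma
  have quad : ∀ a b c : ℝ, 0 ≤ c → (∀ t : ℝ, t * a ≤ t ^ 2 / 2 * c + b / 2) →
      a ^ 2 ≤ b * c := by
    intro a b c hc hineq
    have hb : 0 ≤ b := by have := hineq 0; linarith
    rcases eq_or_lt_of_le hc with h0 | hpos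
    · have ha : a = 0 := by
        by_contra ha
        have h1 := hineq ((b / 2 + 1) / a)
        rw [← h0] at h1
        rw [div_mul_cancel₀ _ ha] at h1
        linarith
      rw [ha, ← h0]; simp
    · have h1 := hineq (a / c)
      have e1 : a / c * a = a ^ 2 / c := by ring
      have e2 : (a / c) ^ 2 / 2 * c = a ^ 2 / (2 * c) := by
        field_simp
      rw [e1, e2] at h1
      have e3 : a ^ 2 / c = 2 * (a ^ 2 / (2 * c)) := by
        field_simp
      rw [e3] at h1
      have h4 : a ^ 2 / (2 * c) ≤ b / 2 := by linarith
      rw [div_le_div_iff₀ (by positivity) (by norm_num)] at h4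
      nlinarith
  -- Cauchy-Schwarz for the PSD form
  have hCS : ∀ k, ⟪T X, k⟫ ^ 2 ≤ B * ⟪T k, k⟫ := by
    intro k
    refine quad _ _ _ (hD k) ?_
    intro t
    have h0 := hD (X - t • k)
    have hsym : ⟪T k, X⟫ = ⟪T X, k⟫ := by rw [hTS k X, real_inner_comm]
    simp only [map_sub, _root_.map_smul, inner_sub_left, inner_sub_right,
      real_inner_smul_left, real_inner_smul_right] at h0
    rw [hsym] at h0
    rw [hBdef]
    nlinarith [h0]
  -- bound on Y - Sp X
  have hW : ∀ k, (⟪Tp X, k⟫ - ⟪Y, k⟫) ^ 2 ≤ B * ⟪T k, k⟫ := by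
    intro k
    refine quad _ _ _ (hD k) ?_
    intro t
    have h1 := h (t • k)
    have hsym : ⟪Tp k, X⟫ = ⟪Tp X, k⟫ := by rw [hTpS k X, real_inner_comm]
    simp only [map_sub, _root_.map_smul, inner_sub_left, inner_sub_right,
      real_inner_smul_left, real_inner_smul_right] at h1
    rw [hsym] at h1
    have hB' : B = ⟪Tp X, X⟫ - ⟪Tm X, X⟫ := by
      rw [hBdef, hTsub, inner_sub_left]
    have hTk : ⟪T k, k⟫ = ⟪Tp k, k⟫ - ⟪Tm k, k⟫ := by
      rw [hTsub, inner_sub_left]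
    rw [hB', hTk]
    nlinarith [h1]
  -- pointwise bound for z
  set z : EuclideanSpace ℝ (Fin n) := Y - Matrix.toEuclideanLin ((2 : ℝ) • Sp - Sm) X
    with hzdef
  have hLX : Matrix.toEuclideanLin ((2 : ℝ) • Sp - Sm) X = Tp X + T X := by
    rw [hTsub, hTpdef, hTmdef, map_sub, _root_.map_smul, LinearMap.sub_apply,
      LinearMap.smul_apply, two_smul]
    abel
  have hzk : ∀ k, ⟪z, k⟫ ≤ 2 * Real.sqrt (B * ⟪T k, k⟫) := by
    intro k
    have e : ⟪z, k⟫ = (⟪Y, k⟫ - ⟪Tp X, k⟫) + (- ⟪T X, k⟫) := by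
      rw [hzdef, hLX, inner_sub_left, inner_add_left]; ring
    have h1 : ⟪Y, k⟫ - ⟪Tp X, k⟫ ≤ Real.sqrt (B * ⟪T k, k⟫) := by
      have := Real.sqrt_le_sqrt (hW k)
      rw [Real.sqrt_sq_eq_abs] at this
      calc ⟪Y, k⟫ - ⟪Tp X, k⟫ ≤ |⟪Tp X, k⟫ - ⟪Y, k⟫| := by
            rw [abs_sub_comm]; exact le_abs_self _
        _ ≤ _ := this
    have h2 : - ⟪T X, k⟫ ≤ Real.sqrt (B * ⟪T k, k⟫) := by
      have := Real.sqrt_le_sqrt (hCS k)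
      rw [Real.sqrt_sq_eq_abs] at this
      exact (neg_le_abs _).trans this
    rw [e]; linarith
  -- main norm bound for z
  have hmain : ‖z‖ ≤ 2 * Real.sqrt C * Real.sqrt B := by
    rcases eq_or_lt_of_le (norm_nonneg z) with h0 | hpos
    · rw [← h0]; positivity
    · have h1 := hzk z
      rw [real_inner_self_eq_norm_sq] at h1
      have h2 : Real.sqrt (B * ⟪T z, z⟫) ≤ Real.sqrt C * Real.sqrt B * ‖z‖ := by
        have h3 : B * ⟪T z, z⟫ ≤ B * (C * ‖z‖ ^ 2) :=
          mul_le_mul_of_nonneg_left (hCb z) hB0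
        calc Real.sqrt (B * ⟪T z, z⟫) ≤ Real.sqrt (B * (C * ‖z‖ ^ 2)) :=
              Real.sqrt_le_sqrt h3
          _ = Real.sqrt C * Real.sqrt B * ‖z‖ := by
              rw [Real.sqrt_mul hB0, Real.sqrt_mul hC0,
                Real.sqrt_sq (norm_nonneg z)]
              ring
      have h4 : ‖z‖ * ‖z‖ ≤ (2 * Real.sqrt C * Real.sqrt B) * ‖z‖ := by
        calc ‖z‖ * ‖z‖ = ‖z‖ ^ 2 := by ring
          _ ≤ 2 * Real.sqrt (B * ⟪T z, z⟫) := h1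
          _ ≤ 2 * (Real.sqrt C * Real.sqrt B * ‖z‖) := by linarith
          _ = (2 * Real.sqrt C * Real.sqrt B) * ‖z‖ := by ring
      exact le_of_mul_le_mul_right h4 hpos
  refine ⟨hmain, ?_⟩
  -- second bound via orthogonal projection
  set K := LinearMap.range T with hKdef
  set p : EuclideanSpace ℝ (Fin n) := (Submodule.orthogonalProjectionOnto K X : EuclideanSpace ℝ (Fin n))
    with hpdef
  have hq : X - p ∈ Kᗮ := Submodule.sub_starProjection_mem_orthogonal (K := K) X
  have horth : ∀ v, ⟪T v, X - p⟫ = 0 := by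
    intro v
    exact (Submodule.mem_orthogonal K (X - p)).1 hq (T v) (LinearMap.mem_range_self T v)
  have hBp : B = ⟪T p, p⟫ := by
    have e1 : X = p + (X - p) := by abel
    have h1 : ⟪T (X - p), p⟫ = 0 := by
      rw [hTS (X - p) p, real_inner_comm]
      exact horth p
    have h2 : ⟪T p, X - p⟫ = 0 := horth p
    have h3 : ⟪T (X - p), X - p⟫ = 0 := horth (X - p)
    calc B = ⟪T (p + (X - p)), p + (X - p)⟫ := by rw [hBdef, ← e1]
      _ = ⟪T p, p⟫ := by
          rw [map_add, inner_add_left, inner_add_right, inner_add_right, h1, h2, h3]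
          ring
  have hsB : Real.sqrt B ≤ Real.sqrt C * ‖p‖ := by
    have h1 : B ≤ C * ‖p‖ ^ 2 := by rw [hBp]; exact hCb p
    calc Real.sqrt B ≤ Real.sqrt (C * ‖p‖ ^ 2) := Real.sqrt_le_sqrt h1
      _ = Real.sqrt C * ‖p‖ := by
          rw [Real.sqrt_mul hC0, Real.sqrt_sq (norm_nonneg p)]
  calc ‖z‖ ≤ 2 * Real.sqrt C * Real.sqrt B := hmain
    _ ≤ 2 * Real.sqrt C * (Real.sqrt C * ‖p‖) := by
        apply mul_le_mul_of_nonneg_left hsB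
        positivity
    _ = 2 * (Real.sqrt C * Real.sqrt C) * ‖p‖ := by ring
    _ = 2 * C * ‖p‖ := by rw [Real.mul_self_sqrt hC0]
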